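/- Let θ_1, ..., θ_d be real numbers such that {1, θ_1, ..., θ_d} is linearly independent over ℚ, and let N be a positive integer. Then the additive subgroup (1/N)(ℤ^d + (θ_1, ..., θ_d)ℤ) = {(1/N)(m + k·(θ_1,...,θ_d)) : m ∈ ℤ^d, k ∈ ℤ} is dense in ℝ^d. -/

import Mathlib

open MeasureTheory Filter Topology Set Function Submodule Algebra Real

namespace KroneckerAux

local notation "𝕋" => AddCircle (1:ℝ)

instance : Fact ((0:ℝ) < 1) := ⟨one_pos⟩

instance : IsProbabilityMeasure (volume : Measure 𝕋) :=
  ⟨by rw [AddCircle.measure_univ]; norm_num⟩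

variable {d : ℕ}

/-- characters of the d-torus -/
noncomputable def chr (n : Fin d → ℤ) : C(Fin d → 𝕋, ℂ) :=
  ∏ i, (fourier (n i)).comp ⟨fun x => x i, continuous_apply i⟩

lemma chr_apply (n : Fin d → ℤ) (x : Fin d → 𝕋) :
    chr n x = ∏ i, fourier (n i) (x i) := by
  simp [chr]

lemma chr_zero : (chr 0 : C(Fin d → 𝕋, ℂ)) = 1 := by
  ext x; simp [chr_apply, fourier_zero]

lemma chr_mul (m n : Fin d → ℤ) : chr m * chr n = chr (m + n) := by
  ext x
  simp only [ContinuousMap.mul_apply, chr_apply, ← Finset.prod_mul_distrib, Pi.add_apply,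
    fourier_add]

lemma chr_star (n : Fin d → ℤ) : chr (-n) = star (chr n) := by
  ext x
  simp only [ContinuousMap.star_apply, chr_apply, RCLike.star_def, map_prod, Pi.neg_apply,
    fourier_neg]

lemma chr_arg_zero (n : Fin d → ℤ) : chr n (0 : Fin d → 𝕋) = 1 := by
  simp [chr_apply, Pi.zero_apply, fourier_eval_zero]

lemma chr_arg_add (n : Fin d → ℤ) (a b : Fin d → 𝕋) :
    chr n (a + b) = chr n a * chr n b := by
  simp only [chr_apply, ← Finset.prod_mul_distrib, Pi.add_apply]
  refine Finset.prod_congr rfl fun i _ => ?_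
  rw [fourier_apply, fourier_apply, fourier_apply, smul_add, AddCircle.toCircle_add,
    Circle.coe_mul]

lemma chr_nsmul (n : Fin d → ℤ) (τ : Fin d → 𝕋) (k : ℕ) :
    chr n (k • τ) = (chr n τ) ^ k := by
  induction k with
  | zero => simpa using chr_arg_zero n
  | succ k ih => rw [succ_nsmul, chr_arg_add, ih, pow_succ]

lemma chr_norm (n : Fin d → ℤ) (x : Fin d → 𝕋) : ‖chr n x‖ = 1 := by
  rw [chr_apply, norm_prod]
  exact Finset.prod_eq_one fun i _ => Circle.norm_coe _


noncomputable def chrAlg (d : ℕ) : StarSubalgebra ℂ C(Fin d → 𝕋, ℂ) where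
  toSubalgebra := Algebra.adjoin ℂ (range (chr (d := d)))
  star_mem' := by
    show Algebra.adjoin ℂ (range (chr (d := d))) ≤ star (Algebra.adjoin ℂ (range chr))
    refine adjoin_le ?_
    rintro - ⟨n, rfl⟩
    exact subset_adjoin ⟨-n, chr_star n⟩

theorem chrAlg_coe :
    Subalgebra.toSubmodule (chrAlg d).toSubalgebra = span ℂ (range (chr (d := d))) := by
  apply adjoin_eq_span_of_subset
  refine Subset.trans ?_ Submodule.subset_span
  intro x hx
  refine Submonoid.closure_induction (fun _ => id) ⟨0, chr_zero⟩ ?_ hx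
  rintro - - - - ⟨m, rfl⟩ ⟨n, rfl⟩
  exact ⟨m + n, (chr_mul m n).symm⟩

theorem chrAlg_separatesPoints : (chrAlg d).SeparatesPoints := by
  intro x y hxy
  obtain ⟨i, hi⟩ : ∃ i, x i ≠ y i := by
    by_contra h; push_neg at h; exact hxy (funext h)
  refine ⟨_, ⟨chr (Pi.single i 1), subset_adjoin ⟨Pi.single i 1, rfl⟩, rfl⟩, ?_⟩
  dsimp only
  have key : ∀ z : Fin d → 𝕋, chr (Pi.single i 1) z = AddCircle.toCircle (z i) := by
    intro z
    rw [chr_apply, Finset.prod_eq_single i (fun j _ hj => by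
      simp [Pi.single_eq_of_ne hj, fourier_zero]) (by simp)]
    simp [Pi.single_eq_same, fourier_one]
  rw [key, key]
  contrapose! hi
  rw [Circle.coe_inj] at hi
  exact AddCircle.injective_toCircle one_ne_zero hi

theorem chrAlg_closure_eq_top : (chrAlg d).topologicalClosure = ⊤ :=
  ContinuousMap.starSubalgebra_topologicalClosure_eq_top_of_separatesPoints _
    chrAlg_separatesPoints

theorem span_chr_closure_eq_top :
    (span ℂ (range (chr (d := d)))).topologicalClosure = ⊤ := by
  rw [← chrAlg_coe]
  exact congr_arg (Subalgebra.toSubmodule <| StarSubalgebra.toSubalgebra ·) chrAlg_closure_eq_top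

lemma integrable_of_continuousMap (f : C(Fin d → 𝕋, ℂ)) : Integrable f :=
  f.continuous.integrable_of_hasCompactSupport (HasCompactSupport.of_compactSpace _)

lemma integral_chr_zero : ∫ x : Fin d → 𝕋, chr 0 x = 1 := by
  simp [chr_zero]

lemma integral_chr {n : Fin d → ℤ} (hn : n ≠ 0) : ∫ x : Fin d → 𝕋, chr n x = 0 := by
  obtain ⟨j, hj⟩ : ∃ j, n j ≠ 0 := by
    by_contra h; push_neg at h; exact hn (funext h)
  set a : Fin d → 𝕋 := Function.update (0 : Fin d → 𝕋) j (((1:ℝ) / 2 / (n j) : ℝ) : 𝕋) with ha_def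
  have ha : chr n a = -1 := by
    rw [chr_apply, Finset.prod_eq_single j (fun i _ hi => by
      simp [ha_def, Function.update_of_ne hi, fourier_eval_zero]) (by simp)]
    have := fourier_add_half_inv_index (T := 1) hj one_pos 0
    rw [zero_add, fourier_eval_zero] at this
    simpa [ha_def] using this
  have key := integral_add_left_eq_self (μ := volume) (fun x => chr n x) a
  simp only [chr_arg_add n a, ha, neg_one_mul] at key
  rw [integral_neg] at key
  linear_combination (-1/2 : ℂ) * key

set_option maxHeartbeats 1000000 in
lemma geom_avg {z : ℂ} (hz : ‖z‖ = 1) (h1 : z ≠ 1) :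
    Tendsto (fun K : ℕ => (K : ℂ)⁻¹ • ∑ k ∈ Finset.range K, z ^ k) atTop (𝓝 0) := by
  have hb : ∀ K : ℕ, ‖(K : ℂ)⁻¹ • ∑ k ∈ Finset.range K, z ^ k‖ ≤ (K : ℝ)⁻¹ * (2 / ‖z - 1‖) := by
    intro K
    rw [norm_smul, _root_.norm_inv, Complex.norm_natCast]
    gcongr
    rw [geom_sum_eq h1, norm_div]
    gcongr
    calc ‖z ^ K - 1‖ ≤ ‖z ^ K‖ + ‖(1 : ℂ)‖ := norm_sub_le _ _
      _ ≤ 2 := by rw [norm_pow, hz, one_pow, norm_one]; norm_num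
  refine squeeze_zero_norm hb ?_
  rw [show (0:ℝ) = 0 * (2 / ‖z-1‖) by ring]
  exact (tendsto_inv_atTop_zero.comp tendsto_natCast_atTop_atTop).mul_const _

lemma avg_tendsto (τ : Fin d → 𝕋) (hτ : ∀ n : Fin d → ℤ, n ≠ 0 → chr n τ ≠ 1)
    (f : C(Fin d → 𝕋, ℂ)) (hf : f ∈ span ℂ (range (chr (d := d)))) :
    Tendsto (fun K : ℕ => (K : ℂ)⁻¹ • ∑ k ∈ Finset.range K, f (k • τ)) atTop
      (𝓝 (∫ x : Fin d → 𝕋, f x)) := by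
  induction hf using Submodule.span_induction with
  | mem f hf =>
    obtain ⟨n, rfl⟩ := hf
    by_cases hn : n = 0
    · subst hn
      rw [integral_chr_zero]
      have h1 : ∀ᶠ K : ℕ in atTop, (K : ℂ)⁻¹ • ∑ k ∈ Finset.range K, chr 0 (k • τ) = 1 := by
        filter_upwards [eventually_ge_atTop 1] with K hK
        have : ∀ k : ℕ, chr (0 : Fin d → ℤ) (k • τ) = 1 := by
          intro k; rw [chr_zero]; rfl
        simp only [this, Finset.sum_const, Finset.card_range, nsmul_eq_mul, mul_one, smul_eq_mul]
        rw [inv_mul_cancel₀]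
        exact_mod_cast Nat.one_le_iff_ne_zero.mp hK
      exact Tendsto.congr' (by filter_upwards [h1] with K hK using hK.symm) tendsto_const_nhds
    · rw [integral_chr hn]
      simp only [chr_nsmul]
      exact geom_avg (chr_norm n τ) (hτ n hn)
  | zero => simpa using tendsto_const_nhds
  | add g h hg hh ihg ihh =>
    have : ∫ x : Fin d → 𝕋, (g + h) x = (∫ x : Fin d → 𝕋, g x) + ∫ x : Fin d → 𝕋, h x := by
      simp only [ContinuousMap.add_apply]
      exact integral_add (integrable_of_continuousMap g) (integrable_of_continuousMap h)
    rw [this]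
    have := ihg.add ihh
    simpa only [ContinuousMap.add_apply, Finset.sum_add_distrib, smul_add] using this
  | smul c g hg ihg =>
    have : ∫ x : Fin d → 𝕋, (c • g) x = c • ∫ x : Fin d → 𝕋, g x := by
      simp only [ContinuousMap.smul_apply]
      exact integral_smul c _
    rw [this]
    have := ihg.const_smul c
    simpa only [ContinuousMap.smul_apply, Finset.smul_sum, smul_comm _ c] using this

theorem orbit_dense (τ : Fin d → 𝕋) (hτ : ∀ n : Fin d → ℤ, n ≠ 0 → chr n τ ≠ 1) :
    Dense (Set.range fun k : ℕ => k • τ) := by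
  rw [Metric.dense_iff]
  by_contra hcon
  push_neg at hcon
  obtain ⟨y, r, hr, hdisj⟩ := hcon
  -- the bump function
  set f₀ : (Fin d → 𝕋) → ℝ := fun z => max (1 - dist z y / r) 0 with hf₀
  have hf₀c : Continuous f₀ :=
    (continuous_const.sub ((continuous_id.dist continuous_const).div_const r)).max
      continuous_const
  have hf₀nonneg : ∀ z, 0 ≤ f₀ z := fun z => le_max_right _ _
  have hf₀vanish : ∀ k : ℕ, f₀ (k • τ) = 0 := by
    intro k
    have hmem : (k • τ) ∉ Metric.ball y r := by
      intro hmem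
      exact (hdisj ▸ Set.mem_inter hmem ⟨k, rfl⟩ : (k • τ) ∈ (∅ : Set _))
    rw [Metric.mem_ball, not_lt] at hmem
    have h1 : 1 - dist (k • τ) y / r ≤ 0 := by
      rw [sub_nonpos]
      exact (one_le_div hr).mpr hmem
    simp [hf₀, max_eq_right h1]
  -- its integral is positive
  have hint₀ : Integrable f₀ :=
    hf₀c.integrable_of_hasCompactSupport (HasCompactSupport.of_compactSpace _)
  set c : ℝ := ∫ z : Fin d → 𝕋, f₀ z with hc
  have hcpos : 0 < c := by
    rw [hc, integral_pos_iff_support_of_nonneg hf₀nonneg hint₀]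
    have hsub : Metric.ball y r ⊆ Function.support f₀ := by
      intro z hz
      rw [Metric.mem_ball] at hz
      have : 0 < 1 - dist z y / r := by
        rw [sub_pos]
        exact (div_lt_one hr).mpr hz
      simp only [Function.mem_support, hf₀]
      positivity
    calc (0 : ENNReal) < volume (Metric.ball y r) :=
          Metric.measure_ball_pos _ _ hr
      _ ≤ volume (Function.support f₀) := measure_mono hsub
  -- complexify
  set f : C(Fin d → 𝕋, ℂ) := ⟨fun z => (f₀ z : ℂ), Complex.continuous_ofReal.comp hf₀c⟩
    with hfdef
  have hfint : ∫ x : Fin d → 𝕋, f x = (c : ℂ) := by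
    rw [hc]
    exact integral_ofReal
  -- approximate by a trigonometric polynomial
  have hfc : f ∈ closure ((span ℂ (range (chr (d := d)))) : Set C(Fin d → 𝕋, ℂ)) := by
    rw [← Submodule.topologicalClosure_coe, span_chr_closure_eq_top]
    trivial
  obtain ⟨P, hPmem, hPdist⟩ := Metric.mem_closure_iff.mp hfc (c / 4) (by positivity)
  rw [dist_comm] at hPdist
  have hPd : ∀ z, ‖P z - f z‖ ≤ c / 4 := fun z => by
    rw [← dist_eq_norm]
    exact le_trans (ContinuousMap.dist_apply_le_dist z) hPdist.le
  -- integral of P is near c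
  have hPint : ‖(∫ x : Fin d → 𝕋, P x) - (c : ℂ)‖ ≤ c / 4 := by
    rw [← hfint, ← integral_sub (integrable_of_continuousMap P) (integrable_of_continuousMap f)]
    calc ‖∫ x : Fin d → 𝕋, (P x - f x)‖ ≤ (c/4) * (volume (univ : Set (Fin d → 𝕋))).toReal :=
          norm_integral_le_of_norm_le_const (Eventually.of_forall hPd)
      _ = c / 4 := by simp
  -- averages of P are small
  have hPavg : ∀ K : ℕ, ‖(K : ℂ)⁻¹ • ∑ k ∈ Finset.range K, P (k • τ)‖ ≤ c / 4 := by
    intro K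
    rcases Nat.eq_zero_or_pos K with hK | hK
    · subst hK; simp; positivity
    have hterm : ∀ k : ℕ, ‖P (k • τ)‖ ≤ c / 4 := by
      intro k
      have := hPd (k • τ)
      rwa [show f (k • τ) = 0 by simp [hfdef, hf₀vanish k], sub_zero] at this
    rw [norm_smul, _root_.norm_inv, Complex.norm_natCast]
    calc (K:ℝ)⁻¹ * ‖∑ k ∈ Finset.range K, P (k • τ)‖
        ≤ (K:ℝ)⁻¹ * (K * (c/4)) := by
          gcongr
          calc ‖∑ k ∈ Finset.range K, P (k • τ)‖ ≤ ∑ k ∈ Finset.range K, ‖P (k • τ)‖ :=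
                norm_sum_le _ _
            _ ≤ ∑ _k ∈ Finset.range K, (c/4) := Finset.sum_le_sum fun k _ => hterm k
            _ = K * (c/4) := by simp
      _ = c / 4 := by
          field_simp
  -- contradiction with the limit
  have htend := avg_tendsto τ hτ P hPmem
  have hev := Metric.tendsto_atTop.mp htend (c/4) (by positivity)
  obtain ⟨K, hKev⟩ := hev
  have h1 := hKev K le_rfl
  rw [dist_eq_norm] at h1
  have h2 := hPavg K
  have hnc : ‖(c : ℂ)‖ = c := by
    rw [Complex.norm_real, Real.norm_eq_abs, abs_of_pos hcpos]
  have hfinal : ‖(c : ℂ)‖ ≤ 3 * (c / 4) := by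
    set A := (K : ℂ)⁻¹ • ∑ k ∈ Finset.range K, P (k • τ)
    set I := ∫ x : Fin d → 𝕋, P x
    calc ‖(c:ℂ)‖ = ‖(((c:ℂ) - I) + (I - A)) + A‖ := by ring_nf
      _ ≤ ‖((c:ℂ) - I) + (I - A)‖ + ‖A‖ := norm_add_le _ _
      _ ≤ (‖(c:ℂ) - I‖ + ‖I - A‖) + ‖A‖ := by gcongr; exact norm_add_le _ _
      _ ≤ (c/4 + c/4) + c/4 := by
          gcongr
          · rw [norm_sub_rev]; exact hPint
          · rw [norm_sub_rev]; exact h1.le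
      _ = 3 * (c/4) := by ring
  rw [hnc] at hfinal
  linarith

end KroneckerAux

open KroneckerAux in
theorem kronecker_dense_scaled
    {d : ℕ} (θ : Fin d → ℝ)
    (hθ : LinearIndependent ℚ (Fin.cons 1 θ : Fin (d + 1) → ℝ))
    (N : ℕ) (hN : 0 < N) :
    Dense {x : Fin d → ℝ | ∃ (m : Fin d → ℤ) (k : ℤ),
      x = fun i => ((m i : ℝ) + (k : ℝ) * θ i) / N} := by
  -- linear independence in concrete form
  have hind : ∀ (c : ℤ) (n : Fin d → ℤ), (∑ i, (n i : ℝ) * θ i) = (c : ℝ) → n = 0 := by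
    intro c n h
    have key := Fintype.linearIndependent_iff.mp hθ
      (Fin.cons (-(c : ℚ)) (fun i => (n i : ℚ))) ?_
    · funext i
      have := key i.succ
      rw [Fin.cons_succ] at this
      exact_mod_cast this
    · rw [Fin.sum_univ_succ]
      simp only [Fin.cons_zero, Fin.cons_succ, Rat.smul_def]
      push_cast
      linear_combination h
  -- torus point
  set τ : Fin d → AddCircle (1:ℝ) := fun i => ((θ i : ℝ) : AddCircle (1:ℝ)) with hτdef
  have hchr : ∀ n : Fin d → ℤ, n ≠ 0 → chr n τ ≠ 1 := by
    intro n hn h1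
    have hval : chr n τ = Complex.exp (2 * π * Complex.I * ((∑ i, (n i : ℝ) * θ i) : ℝ)) := by
      rw [chr_apply]
      have hterm : ∀ i, fourier (n i) (τ i)
          = Complex.exp (2 * π * Complex.I * (((n i : ℝ) * θ i : ℝ) : ℂ)) := by
        intro i
        rw [hτdef, fourier_coe_apply]
        push_cast
        ring_nf
      rw [Finset.prod_congr rfl fun i _ => hterm i, ← Complex.exp_sum]
      congr 1
      rw [← Finset.mul_sum]
      push_cast
      ring
    rw [hval, Complex.exp_eq_one_iff] at h1
    obtain ⟨m, hm⟩ := h1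
    have hI : (2 * π * Complex.I) ≠ 0 := by
      simp [Real.pi_ne_zero, Complex.I_ne_zero]
    have hS : ((∑ i, (n i : ℝ) * θ i : ℝ) : ℂ) = (m : ℂ) := by
      rw [mul_comm] at hm
      exact mul_right_cancel₀ hI hm
    have : (∑ i, (n i : ℝ) * θ i) = (m : ℝ) := by exact_mod_cast hS
    exact hn (hind m n this)
  have hdense := orbit_dense τ hchr
  -- transfer
  rw [Metric.dense_iff]
  intro x r hr
  have hNr : (0 : ℝ) < N * r := by positivity
  obtain ⟨p, hp, k, hk⟩ := Metric.dense_iff.mp hdense (fun i => ((N * x i : ℝ) : AddCircle (1:ℝ))) (N * r) hNr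
  subst hk
  rw [Metric.mem_ball, dist_pi_lt_iff hNr] at hp
  set m : Fin d → ℤ := fun i => - round ((k : ℝ) * θ i - N * x i) with hm
  have hcoord : ∀ i, |(k : ℝ) * θ i - N * x i + (m i : ℝ)| < N * r := by
    intro i
    have h : dist ((k • τ) i) (((N * x i : ℝ)) : AddCircle (1:ℝ)) < N * r := hp i
    have h1 : (k • τ) i = (((k : ℝ) * θ i : ℝ) : AddCircle (1:ℝ)) := by
      rw [Pi.smul_apply, hτdef, ← QuotientAddGroup.mk_nsmul]
      norm_num [nsmul_eq_mul]
    rw [h1, dist_eq_norm, ← QuotientAddGroup.mk_sub, AddCircle.norm_eq] at h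
    simp only [inv_one, one_mul, mul_one] at h
    rw [hm]
    push_cast
    rw [← sub_eq_add_neg]
    exact h
  refine ⟨fun i => ((m i : ℝ) + ((k : ℤ) : ℝ) * θ i) / N, ?_, m, (k : ℤ), rfl⟩
  rw [Metric.mem_ball, dist_pi_lt_iff hr]
  intro i
  rw [Real.dist_eq]
  have hNne : (N : ℝ) ≠ 0 := Nat.cast_ne_zero.mpr hN.ne'
  have : ((m i : ℝ) + ((k : ℤ) : ℝ) * θ i) / N - x i
      = ((k : ℝ) * θ i - N * x i + (m i : ℝ)) / N := by
    push_cast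
    field_simp
    ring
  rw [this, abs_div, abs_of_pos (by exact_mod_cast hN : (0:ℝ) < N)]
  rw [div_lt_iff₀ (by exact_mod_cast hN)]
  calc |(k : ℝ) * θ i - N * x i + (m i : ℝ)| < N * r := hcoord i
    _ = r * N := by ring
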